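/- In the polynomial ring 𝕜[A,B] over a field 𝕜 of characteristic p (p prime), one has the identity Σ_{i=1}^{p−1} i·A^{i−1}·B^{p−1−i} = −(A − B)^{p−2}. (This computes the polynomial P of equation (4.12) for the special choice σ_i = 1 for all i, and is the key to the derivative formula for σ₀.) -/

import Mathlib

open MvPolynomial Finset

/-- Let `p` be a prime and `𝕜` a field of characteristic `p`.  In the
polynomial ring `𝕜[A,B]` one has `∑_{i=1}^{p-1} i·A^{i-1}·B^{p-1-i} = −(A − B)^{p-2}`. -/
theorem sum_eq_neg_sub_pow
    (p : ℕ) (hp : p.Prime) (𝕜 : Type*) [Field 𝕜] [CharP 𝕜 p] :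
    (∑ i ∈ Ioo 0 p, (C ((i : 𝕜)) : MvPolynomial (Fin 2) 𝕜) * X 0 ^ (i - 1) * X 1 ^ (p - 1 - i))
      = -(X 0 - X 1) ^ (p - 2) := by
  have hfact : Fact p.Prime := ⟨hp⟩
  set A : MvPolynomial (Fin 2) 𝕜 := X 0 with hA
  set B : MvPolynomial (Fin 2) 𝕜 := X 1 with hB
  have hABne : A - B ≠ 0 := by
    rw [sub_ne_zero]
    intro h
    exact absurd (MvPolynomial.X_injective h) (by decide)
  -- geometric sum identity
  have hgeom : (∑ i ∈ range p, A ^ i * B ^ (p - 1 - i)) = (A - B) ^ (p - 1) := by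
    apply mul_right_cancel₀ hABne
    rw [geom_sum₂_mul, ← pow_succ, Nat.sub_add_cancel hp.one_lt.le, sub_pow_char]
  -- differentiate with respect to the first variable
  have hD := congrArg (pderiv (0 : Fin 2)) hgeom
  rw [map_sum] at hD
  have hL : ∀ i ∈ range p,
      pderiv (0 : Fin 2) (A ^ i * B ^ (p - 1 - i))
        = (C ((i : 𝕜)) : MvPolynomial (Fin 2) 𝕜) * A ^ (i - 1) * B ^ (p - 1 - i) := by
    intro i _
    rw [pderiv_mul, pderiv_pow, pderiv_pow, hA, hB, pderiv_X_self, pderiv_X_of_ne (by decide)]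
    rw [← MvPolynomial.C_eq_coe_nat]
    ring
  rw [Finset.sum_congr rfl hL] at hD
  have hR : pderiv (0 : Fin 2) ((A - B) ^ (p - 1)) = -(A - B) ^ (p - 2) := by
    rw [pderiv_pow, map_sub, hA, hB, pderiv_X_self, pderiv_X_of_ne (by decide), sub_zero,
      mul_one]
    have h1 : ((p - 1 : ℕ) : MvPolynomial (Fin 2) 𝕜) = -1 := by
      rw [Nat.cast_sub hp.one_lt.le, CharP.cast_eq_zero (MvPolynomial (Fin 2) 𝕜) p]
      ring
    rw [h1, Nat.sub_sub]
    ring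
  rw [hR] at hD
  rw [← hD]
  apply Finset.sum_subset
  · intro i hi
    simp only [mem_Ioo] at hi
    simp only [mem_range]
    omega
  · intro i hi hni
    simp only [mem_range] at hi
    simp only [mem_Ioo] at hni
    have : i = 0 := by omega
    simp [this]
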